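/- Under the hypotheses that L̃ ∼_k L, Õ and O are monotone operators on the complete lattices L̃ and L respectively, and Õ k-mimics O, the image under k of the least fixpoint of Õ is the least fixpoint of O: k(lfp(Õ)) = lfp(O). -/

import Mathlib

open OrdinalApprox in
/-- Under k-similarity of the complete lattices L̃ and L and with monotone Õ, O
such that Õ k-mimics O, the image under k of the least fixpoint of Õ is the
least fixpoint of O. -/
theorem mimic_least_fixpoint {Lt L : Type*} [CompleteLattice Lt] [CompleteLattice L]
    (Ot : Lt → Lt) (O : L → L) (k : Lt → L)
    (hOt : Monotone Ot) (hO : Monotone O)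
    (hchain : ∀ C : Set Lt, C.Nonempty → IsChain (· ≤ ·) C →
        k (sInf C) = sInf (k '' C) ∧ k (sSup C) = sSup (k '' C))
    (hcentral : ∀ x : L, (∃ y : Lt, k y = x) →
        ∃ c : Lt, k c = x ∧ ∀ d : Lt, k d = x → c ≤ d ∨ d ≤ c)
    (hcomm : ∀ x : Lt, k (Ot x) = O (k x))
    (himg : ∀ x : L, ∃ y : Lt, k y = O x) :
    ∀ y : Lt, IsLeast {a : Lt | Ot a = a} y → IsLeast {x : L | O x = x} (k y) := by
  -- k is order-preserving
  have kmono : Monotone k := by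
    intro a b hab
    have hC : IsChain (· ≤ ·) ({a, b} : Set Lt) := by
      intro u hu v hv _
      rcases hu with rfl | hu <;> rcases hv with rfl | hv
      · exact Or.inl le_rfl
      · cases hv; exact Or.inl hab
      · cases hu; exact Or.inr hab
      · cases hu; cases hv; exact Or.inl le_rfl
    have h := (hchain {a, b} ⟨a, by simp⟩ hC).1
    have h1 : sInf ({a, b} : Set Lt) = a := by
      rw [sInf_pair]; exact inf_eq_left.mpr hab
    have h2 : sInf (k '' ({a, b} : Set Lt)) = k a ⊓ k b := by
      rw [Set.image_pair, sInf_pair]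
    rw [h1, h2] at h
    exact h.le.trans inf_le_right
  intro y hy
  obtain ⟨hyfix, hyleast⟩ := hy
  constructor
  · show O (k y) = k y
    rw [← hcomm, hyfix]
  · intro x hx
    -- x is a fixpoint of O; find a central preimage c of x
    have hximg : ∃ z : Lt, k z = x := by
      obtain ⟨z, hz⟩ := himg x
      exact ⟨z, by rw [hz, hx]⟩
    obtain ⟨c, hkc, hcen⟩ := hcentral x hximg
    have hkOtc : k (Ot c) = x := by rw [hcomm, hkc, hx]
    rcases hcen (Ot c) hkOtc with hcle | hlec
    · -- c ≤ Ot c : iterate transfinitely from c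
      set f : Lt →o Lt := ⟨Ot, hOt⟩ with hf
      have h_init : c ≤ f c := hcle
      -- k of every approximant is x
      have hkapprox : ∀ a : Ordinal, k (lfpApprox f c a) = x := by
        intro a
        induction a using Ordinal.induction with
        | h a IH =>
          rw [lfpApprox]
          set S : Set Lt := {z | ∃ b : Ordinal, ∃ _ : b < a, f (lfpApprox f c b) = z} ∪ {c}
            with hS
          have hne : S.Nonempty := ⟨c, Or.inr rfl⟩
          -- each element of S is some approximant
          have hmem : ∀ z ∈ S, ∃ b : Ordinal, lfpApprox f c b = z := by
            rintro z (⟨b, hb, rfl⟩ | rfl)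
            · exact ⟨b + 1, lfpApprox_add_one f h_init b⟩
            · exact ⟨0, by
                exact lfpApprox_zero f⟩
          have hchainS : IsChain (· ≤ ·) S := by
            intro u hu v hv _
            obtain ⟨b1, rfl⟩ := hmem u hu
            obtain ⟨b2, rfl⟩ := hmem v hv
            rcases le_total b1 b2 with h | h
            · exact Or.inl (lfpApprox_mono_right f (x := c) h)
            · exact Or.inr (lfpApprox_mono_right f (x := c) h)
          have hkS : ∀ z ∈ S, k z = x := by
            rintro z (⟨b, hb, rfl⟩ | rfl)
            · show k (Ot (lfpApprox f c b)) = x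
              rw [hcomm, IH b hb, hx]
            · exact hkc
          have himS : k '' S = {x} := by
            apply Set.Subset.antisymm
            · rintro w ⟨z, hz, rfl⟩; exact hkS z hz
            · rintro w rfl; exact ⟨c, Or.inr rfl, hkc⟩
          have := (hchain S hne hchainS).2
          rw [himS, sSup_singleton] at this
          convert this using 2
          rw [hS, sSup_union, sSup_singleton, sup_comm]
          congr 1
          apply le_antisymm
          · exact iSup₂_le fun b hb => le_sSup ⟨b, hb, rfl⟩
          · apply sSup_le
            rintro _ ⟨b, hb, rfl⟩
            exact le_iSup₂_of_le b hb le_rfl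
      -- the approximants stabilize at a fixpoint of Ot
      set w := lfpApprox f c (Cardinal.ord <| Order.succ (Cardinal.mk Lt)) with hw
      have hwfix : w ∈ Function.fixedPoints f :=
        lfpApprox_ord_mem_fixedPoint f h_init
      have hkw : k w = x := hkapprox _
      have hyw : y ≤ w := hyleast hwfix
      calc k y ≤ k w := kmono hyw
        _ = x := hkw
    · -- Ot c ≤ c : c is a prefixpoint, so the Knaster–Tarski lfp is ≤ c
      set f : Lt →o Lt := ⟨Ot, hOt⟩ with hf
      have hm : OrderHom.lfp f ≤ c := OrderHom.lfp_le f hlec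
      have hmfix : Ot (OrderHom.lfp f) = OrderHom.lfp f := OrderHom.map_lfp f
      have hym : y ≤ OrderHom.lfp f := hyleast hmfix
      calc k y ≤ k c := kmono (hym.trans hm)
        _ = x := hkc
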